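/- Let ν be a partition, let k and n be positive integers, and let T be a set-valued tableau of shape ν∗(k) such that the reverse reading word w(T) is a lattice word with content ρ_n = (n, n−1, …, 1). Then each of the numbers 1, 2, …, n occurs at most once in total among the sets filling the cells of the (k)-part of ν∗(k). -/

import Mathlib

open Finset

namespace Stembridge

/-- The staircase partition `ρ_n = (n, n-1, …, 1)` as a Young diagram
(cells `(i, j)` with `i + j < n`, matrix coordinates, 0-indexed). -/
def staircase (n : ℕ) : YoungDiagram where
  cells := (Finset.range n ×ˢ Finset.range n).filter fun c => c.1 + c.2 < n
  isLowerSet := by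
    rintro ⟨i₁, j₁⟩ ⟨i₂, j₂⟩ hle hmem
    obtain ⟨hi, hj⟩ := hle
    simp only [Finset.mem_coe, Finset.mem_filter, Finset.mem_product, Finset.mem_range] at hmem ⊢
    omega

/-- The one-row partition `(k)` as a Young diagram. -/
def rowShape (k : ℕ) : YoungDiagram where
  cells := ({0} : Finset ℕ) ×ˢ Finset.range k
  isLowerSet := by
    rintro ⟨i₁, j₁⟩ ⟨i₂, j₂⟩ hle hmem
    obtain ⟨hi, hj⟩ := hle
    simp only [Finset.mem_coe, Finset.mem_product, Finset.mem_singleton, Finset.mem_range] at hmem ⊢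
    omega

/-- The one-column partition `(1^k)` as a Young diagram. -/
def colShape (k : ℕ) : YoungDiagram where
  cells := Finset.range k ×ˢ ({0} : Finset ℕ)
  isLowerSet := by
    rintro ⟨i₁, j₁⟩ ⟨i₂, j₂⟩ hle hmem
    obtain ⟨hi, hj⟩ := hle
    simp only [Finset.mem_coe, Finset.mem_product, Finset.mem_singleton, Finset.mem_range] at hmem ⊢
    omega

/-- The cells of the skew diagram `λ/μ`. -/
def skewCells (μ lam : YoungDiagram) : Finset (ℕ × ℕ) := lam.cells \ μ.cells

/-- A reverse plane partition on a finite shape of cells: a filling of the cells with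
positive integers which weakly increases along rows (left to right) and down columns.
Entries outside the shape are `0`. -/
structure RPP (shape : Finset (ℕ × ℕ)) where
  entry : ℕ × ℕ → ℕ
  pos : ∀ c ∈ shape, 0 < entry c
  zero_off : ∀ c, c ∉ shape → entry c = 0
  row_le : ∀ i j, (i, j) ∈ shape → (i, j + 1) ∈ shape → entry (i, j) ≤ entry (i, j + 1)
  col_le : ∀ i j, (i, j) ∈ shape → (i + 1, j) ∈ shape → entry (i, j) ≤ entry (i + 1, j)

/-- The weight of a reverse plane partition: `weight P i` is the number of columns of the
shape containing an entry equal to `i`. -/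
def RPP.weight {shape : Finset (ℕ × ℕ)} (P : RPP shape) (i : ℕ) : ℕ :=
  ((shape.filter fun c => P.entry c = i).image Prod.snd).card

/-- A set-valued tableau on a finite shape of cells: a filling of the cells by finite
nonempty sets of positive integers such that `max(left) ≤ min(right)` for horizontally
adjacent cells and `max(upper) < min(lower)` for vertically adjacent cells.
Cells outside the shape carry `∅`. -/
structure SVT (shape : Finset (ℕ × ℕ)) where
  entry : ℕ × ℕ → Finset ℕ
  nonempty : ∀ c ∈ shape, (entry c).Nonempty
  pos : ∀ c ∈ shape, ∀ x ∈ entry c, 0 < x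
  empty_off : ∀ c, c ∉ shape → entry c = ∅
  row_le : ∀ i j, (i, j) ∈ shape → (i, j + 1) ∈ shape →
    ∀ a ∈ entry (i, j), ∀ b ∈ entry (i, j + 1), a ≤ b
  col_lt : ∀ i j, (i, j) ∈ shape → (i + 1, j) ∈ shape →
    ∀ a ∈ entry (i, j), ∀ b ∈ entry (i + 1, j), a < b

/-- The content of a set-valued tableau: `content T i` is the number of cells whose
set contains `i`. -/
def SVT.content {shape : Finset (ℕ × ℕ)} (T : SVT shape) (i : ℕ) : ℕ :=
  (shape.filter fun c => i ∈ T.entry c).card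

/-- The reverse reading word of a set-valued tableau: read the columns from rightmost to
leftmost, each column from top to bottom, the elements within a cell in decreasing order. -/
def SVT.word {shape : Finset (ℕ × ℕ)} (T : SVT shape) : List ℕ :=
  ((List.range (shape.sup Prod.snd + 1)).reverse).flatMap fun j =>
    (List.range (shape.sup Prod.fst + 1)).flatMap fun i =>
      ((T.entry (i, j)).sort (· ≤ ·)).reverse

/-- A word is a lattice word if in every prefix, for every `a ≥ 1`, the number of
occurrences of `a+1` is at most the number of occurrences of `a` (equivalently, the `i`-th
occurrence of `a+1` comes after the `i`-th occurrence of `a`). -/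
def IsLatticeWord (w : List ℕ) : Prop :=
  ∀ t a, 1 ≤ a → (w.take t).count (a + 1) ≤ (w.take t).count a

/-- The content of the staircase partition `ρ_n` as a function: `a ↦ n + 1 - a`
(so `a ↦ 0` for `a > n`), for `a ≥ 1`. -/
def staircaseContent (n : ℕ) : ℕ → ℕ := fun a => n + 1 - a

/-- A semistandard Young tableau on a finite shape of cells: a filling with positive
integers weakly increasing along rows and strictly increasing down columns.
Entries outside the shape are `0`. -/
structure SSYT (shape : Finset (ℕ × ℕ)) where
  entry : ℕ × ℕ → ℕ
  pos : ∀ c ∈ shape, 0 < entry c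
  zero_off : ∀ c, c ∉ shape → entry c = 0
  row_le : ∀ i j, (i, j) ∈ shape → (i, j + 1) ∈ shape → entry (i, j) ≤ entry (i, j + 1)
  col_lt : ∀ i j, (i, j) ∈ shape → (i + 1, j) ∈ shape → entry (i, j) < entry (i + 1, j)

/-- The type of a semistandard Young tableau: `type T i` is the number of entries equal
to `i`. -/
def SSYT.type {shape : Finset (ℕ × ℕ)} (T : SSYT shape) (i : ℕ) : ℕ :=
  (shape.filter fun c => T.entry c = i).card

/-- The cells of the skew shape `ν∗μ`: `μ` occupies the lower-left block and `ν` the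
upper-right block, the top-right corner of `μ` touching the bottom-left corner of `ν`. -/
def starCells (ν μ : YoungDiagram) : Finset (ℕ × ℕ) :=
  ν.cells.image (fun c => (c.1, c.2 + μ.rowLen 0)) ∪
    μ.cells.image (fun c => (c.1 + ν.colLen 0, c.2))

/-- The number of reverse plane partitions of shape `λ/μ` with weight `w` (with the
convention that this is `0` if `μ ⊄ λ`). -/
noncomputable def rppCount (lam μ : YoungDiagram) (w : ℕ →₀ ℕ) : ℕ :=
  if μ.cells ⊆ lam.cells then
    Nat.card {P : RPP (skewCells μ lam) // ∀ i, 1 ≤ i → P.weight i = w i}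
  else 0

/-- The number of set-valued tableaux of shape `λ/μ` with content `m` (with the
convention that this is `0` if `μ ⊄ λ`). -/
noncomputable def svtCount (lam μ : YoungDiagram) (m : ℕ →₀ ℕ) : ℕ :=
  if μ.cells ⊆ lam.cells then
    Nat.card {T : SVT (skewCells μ lam) // ∀ i, 1 ≤ i → T.content i = m i}
  else 0

/-- The number of semistandard Young tableaux of shape `λ/μ` of type `α` (with the
convention that this is `0` if `μ ⊄ λ`). -/
noncomputable def ssytCount (lam μ : YoungDiagram) (α : ℕ →₀ ℕ) : ℕ :=
  if μ.cells ⊆ lam.cells then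
    Nat.card {T : SSYT (skewCells μ lam) // ∀ i, 1 ≤ i → T.type i = α i}
  else 0

/-- The number of set-valued tableaux of a given shape whose reverse reading word is a
lattice word with content `c` (indexed from 1). -/
noncomputable def latticeCount (shape : Finset (ℕ × ℕ)) (c : ℕ → ℕ) : ℕ :=
  Nat.card {T : SVT shape // IsLatticeWord T.word ∧ ∀ a, 1 ≤ a → T.word.count a = c a}

/-- In a set-valued tableau of shape `ν∗(k)` whose reverse reading word is a lattice word
with content `ρ_n = (n, n-1, …, 1)`, each of the numbers `1, …, n` occurs at most once in
total among the sets filling the cells of the `(k)`-part (these cells are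
`(ν.colLen 0, j)` for `j < k`). -/
private lemma flatMap_single {α β : Type*} (f : α → List β) :
    ∀ (l : List α), l.Nodup → ∀ r ∈ l, (∀ x ∈ l, x ≠ r → f x = []) → l.flatMap f = f r := by
  intro l
  induction l with
  | nil => intro _ r hr; simp at hr
  | cons x xs ih =>
    intro hnd r hr hoff
    rcases List.mem_cons.mp hr with rfl | hr
    · have : xs.flatMap f = [] := by
        apply List.flatMap_eq_nil_iff.mpr
        intro y hy
        exact hoff y (List.mem_cons_of_mem _ hy) (fun h => (List.nodup_cons.mp hnd).1 (h ▸ hy))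
      simp [List.flatMap_cons, this, hoff]
    · have hx : f x = [] := by
        apply hoff x (List.mem_cons_self)
        rintro rfl
        exact (List.nodup_cons.mp hnd).1 hr
      rw [List.flatMap_cons, hx, List.nil_append]
      exact ih (List.nodup_cons.mp hnd).2 r hr
        (fun y hy => hoff y (List.mem_cons_of_mem _ hy))

private lemma dropWhile_le {a : ℕ} :
    ∀ (L : List ℕ), L.Pairwise (· ≥ ·) →
      ∀ x ∈ L.dropWhile (fun y => a < y), x ≤ a := by
  intro L
  induction L with
  | nil => simp
  | cons b L ih =>
    intro hs x hx
    by_cases hb : a < b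
    · rw [List.dropWhile_cons_of_pos (by simpa using hb)] at hx
      exact ih hs.of_cons x hx
    · rw [List.dropWhile_cons_of_neg (by simpa using hb)] at hx
      rcases List.mem_cons.mp hx with rfl | hx
      · omega
      · exact le_trans (List.rel_of_pairwise_cons hs hx) (by omega)

theorem row_part_multiplicity_le_one (ν : YoungDiagram) (k n : ℕ) (hk : 1 ≤ k)
    (hn : 1 ≤ n) (T : SVT (starCells ν (rowShape k))) (hlat : IsLatticeWord T.word)
    (hcont : ∀ a, 1 ≤ a → T.word.count a = staircaseContent n a) :
    ∀ a, 1 ≤ a → a ≤ n →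
      ((Finset.range k).filter fun j => a ∈ T.entry (ν.colLen 0, j)).card ≤ 1 := by
  intro a ha han
  by_contra hcard
  push_neg at hcard
  rw [Finset.one_lt_card] at hcard
  obtain ⟨j, hj, j', hj', hne⟩ := hcard
  simp only [Finset.mem_filter, Finset.mem_range] at hj hj'
  set r := ν.colLen 0 with hr
  obtain ⟨j1, j2, hjlt, hj1k, hj2k, ha1, ha2⟩ :
      ∃ j1 j2, j1 < j2 ∧ j1 < k ∧ j2 < k ∧
        a ∈ T.entry (r, j1) ∧ a ∈ T.entry (r, j2) := by
    rcases lt_or_gt_of_ne hne with h | h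
    · exact ⟨j, j', h, hj.1, hj'.1, hj.2, hj'.2⟩
    · exact ⟨j', j, h, hj'.1, hj.1, hj'.2, hj.2⟩
  -- basic facts about the shape
  have hrowLen : (rowShape k).rowLen 0 = k := by
    have h1 : ∀ j, ((0, j) : ℕ × ℕ) ∈ rowShape k ↔ j < (rowShape k).rowLen 0 :=
      fun j => YoungDiagram.mem_iff_lt_rowLen
    have h2 : ∀ j, ((0, j) : ℕ × ℕ) ∈ rowShape k ↔ j < k := by
      intro j
      simp [rowShape, YoungDiagram.mem_cells]
    rcases lt_trichotomy ((rowShape k).rowLen 0) k with h | h | h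
    · exact absurd ((h1 _).mp ((h2 _).mpr h)) (lt_irrefl _)
    · exact h
    · exact absurd ((h2 _).mp ((h1 _).mpr h)) (lt_irrefl _)
  have hrow_mem : ∀ j, j < k → ((r, j) : ℕ × ℕ) ∈ starCells ν (rowShape k) := by
    intro j hjk
    unfold starCells
    apply Finset.mem_union_right
    apply Finset.mem_image.mpr
    refine ⟨(0, j), ?_, ?_⟩
    · simp [rowShape, hjk]
    · simp [hr]
  have hcol : ∀ i jj, ((i, jj) : ℕ × ℕ) ∈ starCells ν (rowShape k) → jj < k → i = r := by
    intro i jj hmem hjk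
    unfold starCells at hmem
    rcases Finset.mem_union.mp hmem with h | h
    · obtain ⟨⟨c1, c2⟩, _, heq⟩ := Finset.mem_image.mp h
      simp only [Prod.mk.injEq] at heq
      rw [hrowLen] at heq
      omega
    · obtain ⟨⟨c1, c2⟩, hc, heq⟩ := Finset.mem_image.mp h
      simp only [Prod.mk.injEq] at heq
      simp only [rowShape, YoungDiagram.mem_cells, Finset.mem_product, Finset.mem_singleton,
        Finset.mem_range] at hc
      omega
  -- all entries strictly to the left of column j2 (in the row part) are ≤ a
  have hchain : ∀ m jj, jj + 1 + m = j2 → ∀ x ∈ T.entry (r, jj), x ≤ a := by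
    intro m
    induction m with
    | zero =>
      intro jj hjj x hx
      have h1 := hrow_mem jj (by omega)
      have h2 := hrow_mem (jj + 1) (by omega)
      have ha2' : a ∈ T.entry (r, jj + 1) := by rw [show jj + 1 = j2 by omega]; exact ha2
      exact T.row_le r jj h1 h2 x hx a ha2'
    | succ m ih =>
      intro jj hjj x hx
      have h1 := hrow_mem jj (by omega)
      have h2 := hrow_mem (jj + 1) (by omega)
      obtain ⟨y, hy⟩ := T.nonempty _ h2
      exact le_trans (T.row_le r jj h1 h2 x hx y hy) (ih (jj + 1) (by omega) y hy)
  have hleft : ∀ jj, jj < j2 → ∀ x ∈ T.entry (r, jj), x ≤ a :=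
    fun jj hjj => hchain (j2 - jj - 1) jj (by omega)
  -- word decomposition
  set I := (starCells ν (rowShape k)).sup Prod.fst + 1 with hI
  set J := (starCells ν (rowShape k)).sup Prod.snd + 1 with hJ
  set colW : ℕ → List ℕ :=
    fun jj => (List.range I).flatMap fun i => ((T.entry (i, jj)).sort (· ≤ ·)).reverse
    with hcolW
  have hword : T.word = (List.range J).reverse.flatMap colW := rfl
  have hj2J : j2 < J := by
    have := Finset.le_sup (f := Prod.snd) (hrow_mem j2 hj2k)
    simp only at this
    omega
  have hrI : r < I := by
    have := Finset.le_sup (f := Prod.fst) (hrow_mem j2 hj2k)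
    simp only at this
    omega
  -- elements appearing in colW jj with jj < j2 are ≤ a
  have hmem_colW : ∀ jj x, x ∈ colW jj → ∃ i, x ∈ T.entry (i, jj) := by
    intro jj x hx
    rw [hcolW] at hx
    obtain ⟨i, _, hx⟩ := List.mem_flatMap.mp hx
    rw [List.mem_reverse, Finset.mem_sort] at hx
    exact ⟨i, hx⟩
  have hcolW_le : ∀ jj, jj < j2 → ∀ x ∈ colW jj, x ≤ a := by
    intro jj hjj x hx
    obtain ⟨i, hx⟩ := hmem_colW jj x hx
    have hmem : ((i, jj) : ℕ × ℕ) ∈ starCells ν (rowShape k) := by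
      by_contra hmem
      rw [T.empty_off _ hmem] at hx
      simp at hx
    have : i = r := hcol i jj hmem (by omega)
    exact hleft jj hjj x (this ▸ hx)
  -- split the reversed column range at j2
  have hsplit : (List.range J).reverse =
      ((List.range (J - (j2 + 1))).map (fun x => j2 + 1 + x)).reverse ++
        j2 :: (List.range j2).reverse := by
    have hJeq : J = (j2 + 1) + (J - (j2 + 1)) := by omega
    rw [hJeq, List.range_add, List.reverse_append, List.range_succ, List.reverse_append]
    simp
  set L : List ℕ := ((T.entry (r, j2)).sort (· ≤ ·)).reverse with hL
  have hcolWj2 : colW j2 = L := by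
    rw [hcolW]
    apply flatMap_single _ _ (List.nodup_range (n := I)) r (List.mem_range.mpr hrI)
    intro i _ hi
    have : ((i, j2) : ℕ × ℕ) ∉ starCells ν (rowShape k) := fun h => hi (hcol i j2 h hj2k)
    rw [T.empty_off _ this, Finset.sort_empty, List.reverse_nil]
  set p : ℕ → Bool := fun y => decide (a < y) with hp
  set X : List ℕ := (((List.range (J - (j2 + 1))).map (fun x => j2 + 1 + x)).reverse).flatMap colW
    with hX
  set R : List ℕ := ((List.range j2).reverse).flatMap colW with hR
  have hword2 : T.word = (X ++ L.takeWhile p) ++ (L.dropWhile p ++ R) := by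
    rw [hword, hsplit, List.flatMap_append, List.flatMap_cons, hcolWj2]
    rw [← hX, ← hR]
    simp only [List.append_assoc]
    rw [← List.append_assoc (List.takeWhile p L), List.takeWhile_append_dropWhile]
  set t : ℕ := (X ++ L.takeWhile p).length with ht
  have hdrop : T.word.drop t = L.dropWhile p ++ R := by
    rw [hword2, ht, List.drop_left]
  have htake : T.word.take t = X ++ L.takeWhile p := by
    rw [hword2, ht, List.take_left]
  -- a is in L and survives dropWhile
  have haL : a ∈ L := by rw [hL, List.mem_reverse, Finset.mem_sort]; exact ha2
  have hLsorted : L.Pairwise (· ≥ ·) := by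
    rw [hL]
    exact List.pairwise_reverse.mpr (by simpa using Finset.pairwise_sort _ (· ≤ ·))
  have ha_drop : a ∈ L.dropWhile p := by
    have := List.takeWhile_append_dropWhile (p := p) (l := L)
    rw [← this] at haL
    rcases List.mem_append.mp haL with h | h
    · have := List.mem_takeWhile_imp h
      simp [hp] at this
    · exact h
  have ha_R : a ∈ R := by
    rw [hR]
    apply List.mem_flatMap.mpr
    refine ⟨j1, ?_, ?_⟩
    · rw [List.mem_reverse, List.mem_range]; exact hjlt
    · rw [hcolW]
      apply List.mem_flatMap.mpr
      exact ⟨r, List.mem_range.mpr hrI, by rw [List.mem_reverse, Finset.mem_sort]; exact ha1⟩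
  -- counts in the suffix
  have hcount_a_drop : 2 ≤ (T.word.drop t).count a := by
    rw [hdrop, List.count_append]
    have h1 : 1 ≤ (L.dropWhile p).count a := List.count_pos_iff.mpr ha_drop
    have h2 : 1 ≤ R.count a := List.count_pos_iff.mpr ha_R
    omega
  have hcount_b_drop : (T.word.drop t).count (a + 1) = 0 := by
    rw [hdrop]
    apply List.count_eq_zero.mpr
    intro hmem
    rcases List.mem_append.mp hmem with h | h
    · have := dropWhile_le L hLsorted _ h
      omega
    · rw [hR] at h
      obtain ⟨jj, hjj, h⟩ := List.mem_flatMap.mp h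
      rw [List.mem_reverse, List.mem_range] at hjj
      have := hcolW_le jj hjj _ h
      omega
  -- put everything together
  have hsum : ∀ x : ℕ, T.word.count x = (T.word.take t).count x + (T.word.drop t).count x := by
    intro x
    conv_lhs => rw [← List.take_append_drop t T.word]
    rw [List.count_append]
  have hca := hcont a ha
  have hcb := hcont (a + 1) (by omega)
  rw [staircaseContent] at hca hcb
  have hlatt := hlat t a ha
  have h1 := hsum a
  have h2 := hsum (a + 1)
  omega

end Stembridge
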